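/- Let L be a Lie algebra over ℂ, H a Lie subalgebra of L, and M a Lie module over L that is spanned as a ℂ-vector space by the union of its weight spaces M_μ = {v ∈ M : h · v = μ(h) • v for all h ∈ H} over all linear functionals μ : H → ℂ. Suppose there is a linear functional λ and a nonzero vector w ∈ M such that M_λ = ℂ • w and the smallest L-submodule of M containing w is M. Then the sum of all proper L-submodules of M is again a proper L-submodule; in other words, M has a unique maximal proper L-submodule. -/

import Mathlib

section Aux

variable {L : Type*} [LieRing L] [LieAlgebra ℂ L]
  {H : LieSubalgebra ℂ L}
  {M : Type*} [AddCommGroup M] [Module ℂ M] [LieRingModule L M] [LieModule ℂ L M]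

/-- The weight space for a functional `μ` as a `ℂ`-submodule. -/
def weightSubmoduleAux (H : LieSubalgebra ℂ L) (M : Type*) [AddCommGroup M] [Module ℂ M]
    [LieRingModule L M] [LieModule ℂ L M] (μ : Module.Dual ℂ H) : Submodule ℂ M where
  carrier := {v : M | ∀ h : H, ⁅(h : L), v⁆ = μ h • v}
  add_mem' := by
    intro a b ha hb h
    rw [lie_add, ha h, hb h, smul_add]
  zero_mem' := by
    intro h
    rw [lie_zero, smul_zero]
  smul_mem' := by
    intro c a ha h
    rw [lie_smul, ha h, smul_comm]

/-- Key lemma: if a sum of weight vectors with pairwise distinct weights lies in an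
`H`-invariant submodule `N`, then each summand lies in `N`. -/
lemma weight_components_mem_aux (N : Submodule ℂ M)
    (hN : ∀ (h : H) (v : M), v ∈ N → ⁅(h : L), v⁆ ∈ N) :
    ∀ (s : Finset (Module.Dual ℂ H)) (c : Module.Dual ℂ H → M),
      (∀ μ ∈ s, c μ ∈ weightSubmoduleAux H M μ) →
      (∑ μ ∈ s, c μ) ∈ N → ∀ μ₀ ∈ s, c μ₀ ∈ N := by
  classical
  intro s
  induction s using Finset.strongInduction with
  | _ s ih =>
    intro c hc hsum μ₀ hμ₀
    by_cases hall : ∀ μ ∈ s, μ = μ₀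
    · have hs : s = {μ₀} := by
        apply Finset.eq_singleton_iff_unique_mem.mpr ⟨hμ₀, hall⟩
      rw [hs, Finset.sum_singleton] at hsum
      exact hsum
    · push_neg at hall
      obtain ⟨μ₁, hμ₁s, hμ₁ne⟩ := hall
      -- find h separating μ₀ and μ₁
      have hsep : ∃ h : H, μ₁ h ≠ μ₀ h := by
        by_contra hcon
        push_neg at hcon
        exact hμ₁ne (LinearMap.ext hcon)
      obtain ⟨h, hh⟩ := hsep
      set c' : Module.Dual ℂ H → M := fun μ => (μ h - μ₁ h) • c μ with hc'
      have hμ₀s' : μ₀ ∈ s.erase μ₁ := Finset.mem_erase.mpr ⟨fun e => hμ₁ne e.symm, hμ₀⟩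
      have hsub : s.erase μ₁ ⊂ s := Finset.erase_ssubset hμ₁s
      have hc'wt : ∀ μ ∈ s.erase μ₁, c' μ ∈ weightSubmoduleAux H M μ := by
        intro μ hμ
        exact Submodule.smul_mem _ _ (hc μ (Finset.mem_of_mem_erase hμ))
      have hsum' : (∑ μ ∈ s.erase μ₁, c' μ) ∈ N := by
        have h0 : c' μ₁ = 0 := by simp [hc']
        rw [Finset.sum_erase s h0]
        have heq : ∑ μ ∈ s, c' μ = ⁅(h : L), ∑ μ ∈ s, c μ⁆ - μ₁ h • ∑ μ ∈ s, c μ := by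
          rw [Finset.smul_sum]
          have hlie : ⁅(h : L), ∑ μ ∈ s, c μ⁆ = ∑ μ ∈ s, ⁅(h : L), c μ⁆ :=
            map_sum (LieModule.toEnd ℂ L M (h : L)) c s
          rw [hlie, ← Finset.sum_sub_distrib]
          refine Finset.sum_congr rfl fun μ hμ => ?_
          rw [hc μ hμ h, hc']
          exact sub_smul _ _ _
        rw [heq]
        exact Submodule.sub_mem _ (hN h _ hsum) (Submodule.smul_mem _ _ hsum)
      have := ih (s.erase μ₁) hsub c' hc'wt hsum' μ₀ hμ₀s'
      have hne : (μ₀ h - μ₁ h : ℂ) ≠ 0 := sub_ne_zero.mpr (fun e => hh e.symm)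
      have : (μ₀ h - μ₁ h)⁻¹ • ((μ₀ h - μ₁ h) • c μ₀) ∈ N := Submodule.smul_mem _ _ this
      rwa [smul_smul, inv_mul_cancel₀ hne, one_smul] at this

end Aux

/-- A weight module generated by a weight vector `w` spanning its
one-dimensional top weight space `M_λ` has a unique maximal proper submodule: the sum of all
proper `L`-submodules is proper. -/
theorem unique_maximal_submodule_of_highest_weight_module
    (L : Type*) [LieRing L] [LieAlgebra ℂ L]
    (H : LieSubalgebra ℂ L)
    (M : Type*) [AddCommGroup M] [Module ℂ M] [LieRingModule L M] [LieModule ℂ L M]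
    (hwt : Submodule.span ℂ
      (⋃ μ : Module.Dual ℂ H, {v : M | ∀ h : H, ⁅(h : L), v⁆ = μ h • v}) = ⊤)
    (lam : Module.Dual ℂ H) (w : M) (hw : w ≠ 0)
    (hlam : {v : M | ∀ h : H, ⁅(h : L), v⁆ = lam h • v} =
      (Submodule.span ℂ {w} : Submodule ℂ M))
    (hgen : LieSubmodule.lieSpan ℂ L {w} = ⊤) :
    sSup {N : LieSubmodule ℂ L M | N ≠ ⊤} ≠ ⊤ := by
  classical
  set W : Module.Dual ℂ H → Submodule ℂ M := weightSubmoduleAux H M with hW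
  -- the iSup of the weight submodules is everything
  have hWtop : (⨆ μ, W μ) = ⊤ := by
    rw [← hwt]
    apply le_antisymm
    · refine iSup_le fun μ => ?_
      intro v hv
      exact Submodule.subset_span (Set.mem_iUnion.mpr ⟨μ, hv⟩)
    · rw [Submodule.span_le]
      refine Set.iUnion_subset fun μ v hv => ?_
      exact (Submodule.mem_iSup_of_mem μ hv : v ∈ ⨆ μ, W μ)
  -- w is a weight vector of weight lam
  have hwlam : w ∈ W lam := by
    have h2 : w ∈ {v : M | ∀ h : H, ⁅(h : L), v⁆ = lam h • v} := by
      rw [hlam]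
      exact Submodule.mem_span_singleton_self w
    exact h2
  -- K : span of the weight spaces with weight ≠ lam
  set K : Submodule ℂ M := ⨆ (μ : {μ : Module.Dual ℂ H // μ ≠ lam}), W μ with hK
  -- w ∉ K
  have hwK : w ∉ K := by
    intro hwKmem
    rw [hK, Submodule.mem_iSup_iff_exists_finsupp] at hwKmem
    obtain ⟨f, hf, hfsum⟩ := hwKmem
    set e : {μ : Module.Dual ℂ H // μ ≠ lam} ↪ Module.Dual ℂ H :=
      ⟨Subtype.val, Subtype.val_injective⟩ with he
    set s : Finset (Module.Dual ℂ H) := insert lam (f.support.map e) with hs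
    set c : Module.Dual ℂ H → M := fun μ => if hμ : μ = lam then -w else f ⟨μ, hμ⟩ with hc
    have hlamnot : lam ∉ f.support.map e := by
      intro hmem
      obtain ⟨i, _, hi⟩ := Finset.mem_map.mp hmem
      exact i.2 hi
    have hclam : c lam = -w := by simp [hc]
    have hcwt : ∀ μ ∈ s, c μ ∈ weightSubmoduleAux H M μ := by
      intro μ hμ
      by_cases hμlam : μ = lam
      · subst hμlam
        rw [hclam]
        exact Submodule.neg_mem _ hwlam
      · have : c μ = f ⟨μ, hμlam⟩ := by simp [hc, hμlam]
        rw [this]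
        exact hf ⟨μ, hμlam⟩
    have hcsum : (∑ μ ∈ s, c μ) = 0 := by
      rw [hs, Finset.sum_insert hlamnot, hclam, Finset.sum_map]
      have : ∀ i ∈ f.support, c (e i) = f i := by
        intro i _
        simp only [hc, he, Function.Embedding.coeFn_mk, dif_neg i.2]
      rw [Finset.sum_congr rfl this]
      have : (f.sum fun _ v => v) = ∑ i ∈ f.support, f i := rfl
      rw [← this, hfsum, neg_add_cancel]
    have hbot : ∀ (h : H) (v : M), v ∈ (⊥ : Submodule ℂ M) → ⁅(h : L), v⁆ ∈ (⊥ : Submodule ℂ M) := by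
      intro h v hv
      rw [Submodule.mem_bot] at hv ⊢
      rw [hv, lie_zero]
    have hsum0 : (∑ μ ∈ s, c μ) ∈ (⊥ : Submodule ℂ M) := by
      rw [hcsum]; exact Submodule.zero_mem _
    have := weight_components_mem_aux (⊥ : Submodule ℂ M) hbot s c hcwt hsum0 lam
      (Finset.mem_insert_self _ _)
    rw [hclam, Submodule.mem_bot, neg_eq_zero] at this
    exact hw this
  -- every proper Lie submodule is contained in K
  have hproper : ∀ N : LieSubmodule ℂ L M, N ≠ ⊤ → (N : Submodule ℂ M) ≤ K := by
    intro N hN v hv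
    have hwN : w ∉ N := by
      intro hwNmem
      apply hN
      rw [eq_top_iff, ← hgen]
      exact LieSubmodule.lieSpan_le.mpr (Set.singleton_subset_iff.mpr hwNmem)
    -- decompose v into weight components
    have hvtop : v ∈ ⨆ μ, W μ := by rw [hWtop]; exact Submodule.mem_top
    rw [Submodule.mem_iSup_iff_exists_finsupp] at hvtop
    obtain ⟨f, hf, hfsum⟩ := hvtop
    have hfsum' : (∑ μ ∈ f.support, f μ) = v := hfsum
    have hNlie : ∀ (h : H) (u : M), u ∈ (N : Submodule ℂ M) → ⁅(h : L), u⁆ ∈ (N : Submodule ℂ M) :=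
      fun h u hu => N.lie_mem hu
    have hcomp : ∀ μ ∈ f.support, f μ ∈ (N : Submodule ℂ M) :=
      weight_components_mem_aux (N : Submodule ℂ M) hNlie f.support f
        (fun μ _ => hf μ) (by rw [hfsum']; exact hv)
    -- the lam-component of v is 0
    have hflam : f lam = 0 := by
      by_cases hmem : lam ∈ f.support
      · have h1 : f lam ∈ (N : Submodule ℂ M) := hcomp lam hmem
        have h2 : f lam ∈ (Submodule.span ℂ {w} : Submodule ℂ M) := by
          have := hf lam
          rw [hW] at this
          have h3 : f lam ∈ {v : M | ∀ h : H, ⁅(h : L), v⁆ = lam h • v} := this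
          rw [hlam] at h3
          exact h3
        obtain ⟨cs, hcs⟩ := Submodule.mem_span_singleton.mp h2
        by_cases hcs0 : cs = 0
        · rw [← hcs, hcs0, zero_smul]
        · exfalso
          apply hwN
          have : cs⁻¹ • (cs • w) ∈ (N : Submodule ℂ M) := by
            rw [hcs]; exact Submodule.smul_mem _ _ h1
          rwa [smul_smul, inv_mul_cancel₀ hcs0, one_smul] at this
      · exact Finsupp.notMem_support_iff.mp hmem
    -- so v lies in K
    rw [← hfsum']
    refine Submodule.sum_mem _ fun μ hμ => ?_
    by_cases hμlam : μ = lam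
    · rw [hμlam, hflam]; exact Submodule.zero_mem _
    · exact Submodule.mem_iSup_of_mem (⟨μ, hμlam⟩ : {μ : Module.Dual ℂ H // μ ≠ lam}) (hf μ)
  -- conclude
  intro htop
  have hcoe : ((sSup {N : LieSubmodule ℂ L M | N ≠ ⊤} : LieSubmodule ℂ L M) : Submodule ℂ M)
      = ⊤ := by rw [htop]; rfl
  have hle : ((sSup {N : LieSubmodule ℂ L M | N ≠ ⊤} : LieSubmodule ℂ L M) : Submodule ℂ M)
      ≤ K := by
    rw [LieSubmodule.sSup_toSubmodule_eq_iSup]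
    exact iSup₂_le fun N hN => hproper N hN
  rw [hcoe] at hle
  exact hwK (hle Submodule.mem_top)
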